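/- Let F be the involution on letters of {b,β} given by F(b)=β, F(β)=b, extended letterwise to words. Let w ∈ {b,β}* be nonempty and suppose w is not of the form (uF(u))^k for any nonempty word u and k ≥ 1. Then for all 0 ≤ t < s ≤ |w|−1, the cyclic shifts satisfy cyc^s(w) ≠ F(cyc^t(w)). -/

import Mathlib

private lemma flatten_replicate_length {α : Type*} (l : List α) (k : ℕ) :
    (List.replicate k l).flatten.length = k * l.length := by
  induction k with
  | zero => simp
  | succ k ih => simp [List.replicate_succ, ih, Nat.succ_mul, Nat.add_comm]

private lemma flatten_replicate_getElem {α : Type*} (l : List α) (hl : 0 < l.length) :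
    ∀ (k i : ℕ) (h : i < (List.replicate k l).flatten.length),
      (List.replicate k l).flatten[i] = l[i % l.length]'(Nat.mod_lt _ hl) := by
  intro k
  induction k with
  | zero => simp
  | succ k ih =>
    intro i h
    simp only [List.replicate_succ, List.flatten_cons]
    by_cases hi : i < l.length
    · rw [List.getElem_append_left hi]
      simp [Nat.mod_eq_of_lt hi]
    · push_neg at hi
      have h' : i - l.length < (List.replicate k l).flatten.length := by
        simp only [List.replicate_succ, List.flatten_cons, List.length_append] at h
        omega
      rw [List.getElem_append_right hi, ih (i - l.length) h']
      have hmm : (i - l.length) % l.length = i % l.length := (Nat.mod_eq_sub_mod hi).symm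
      simp only [hmm]

/-- Over the two-letter alphabet {b, β} (encoded as `Bool`, with F the exchange of the
two letters extended letterwise, i.e. `List.map (!·)`): if a nonempty word w is not of
the form (u F(u))^k with u nonempty and k ≥ 1, then no cyclic shift cyc^s(w) equals the
F-image of a cyclic shift cyc^t(w) for 0 ≤ t < s ≤ |w|−1. -/
theorem cyclic_shift_ne_F_image (w : List Bool) (hw : w ≠ [])
    (hpow : ∀ (u : List Bool) (k : ℕ), u ≠ [] → 1 ≤ k →
      w ≠ (List.replicate k (u ++ u.map fun x => !x)).flatten) :
    ∀ t s, t < s → s ≤ w.length - 1 → w.rotate s ≠ (w.rotate t).map fun x => !x := by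
  intro t s hts hs heq
  set n := w.length with hn
  have hn0 : 0 < n := List.length_pos_iff.2 hw
  have hsn : s < n := by omega
  have htn : t < n := hts.trans hsn
  set d := s - t with hd
  have hd0 : 0 < d := Nat.sub_pos_of_lt hts
  have hdn : d < n := by omega
  -- pointwise version of heq
  have hpt : ∀ i, i < n → w[(i + s) % n]'(Nat.mod_lt _ hn0) =
      ! (w[(i + t) % n]'(Nat.mod_lt _ hn0)) := by
    intro i hi
    have h1 : (w.rotate s)[i]'(by simpa using hi) =
        ((w.rotate t).map (fun x => !x))[i]'(by simpa using hi) := by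
      simp only [heq]
    rw [List.getElem_rotate] at h1
    rw [List.getElem_map, List.getElem_rotate] at h1
    exact h1
  -- key: shifting the index by d negates the letter
  have key : ∀ j, (hj : j < n) → w[(j + d) % n]'(Nat.mod_lt _ hn0) = ! (w[j]'hj) := by
    intro j hj
    have h1 := hpt ((j + (n - t)) % n) (Nat.mod_lt _ hn0)
    have e1 : ((j + (n - t)) % n + t) % n = j := by
      rw [Nat.mod_add_mod]
      have e : j + (n - t) + t = j + n := by omega
      rw [e, Nat.add_mod_right, Nat.mod_eq_of_lt hj]
    have e2 : ((j + (n - t)) % n + s) % n = (j + d) % n := by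
      rw [Nat.mod_add_mod]
      have e : j + (n - t) + s = (j + d) + n := by omega
      rw [e, Nat.add_mod_right]
    simp only [e1, e2] at h1
    exact h1
  -- the word as a function on ℕ, periodic with period n
  set f : ℕ → Bool := fun i => w.getD (i % n) false with hf
  have fI : ∀ i, (hi : i < n) → f i = w[i]'hi := by
    intro i hi
    simp only [hf]
    rw [Nat.mod_eq_of_lt hi, List.getD_eq_getElem _ _ hi]
  have fd : ∀ i, f (i + d) = ! f i := by
    intro i
    have h1 : (i + d) % n = (i % n + d) % n := by
      conv_lhs => rw [← Nat.mod_add_mod]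
    have h2 := key (i % n) (Nat.mod_lt _ hn0)
    simp only [hf]
    rw [h1, List.getD_eq_getElem _ _ (Nat.mod_lt _ hn0),
      List.getD_eq_getElem _ _ (Nat.mod_lt _ hn0), h2]
  -- periods of f
  set P : ℕ → Prop := fun m => ∀ i, f (i + m) = f i with hP
  have Pn : P n := by
    intro i
    simp only [hf, Nat.add_mod_right]
  have P2d : P (2 * d) := by
    intro i
    have e : i + 2 * d = (i + d) + d := by omega
    rw [e, fd, fd, Bool.not_not]
  have Pmul : ∀ (c a : ℕ), P a → P (c * a) := by
    intro c a ha
    induction c with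
    | zero => intro i; simp
    | succ c ih =>
      intro i
      have e : i + (c + 1) * a = (i + c * a) + a := by ring
      rw [e, ha, ih]
  have Pmul' : ∀ (c a : ℕ), P a → P (a * c) := fun c a h => (mul_comm c a) ▸ Pmul c a h
  have Psub : ∀ a b, P a → P b → b ≤ a → P (a - b) := by
    intro a b ha hb hba i
    have h1 := hb (i + (a - b))
    have e : i + (a - b) + b = i + a := by omega
    rw [e, ha] at h1
    exact h1.symm
  have Pgcd : ∀ x y, P x → P y → P (Nat.gcd x y) := by
    intro x y
    induction x, y using Nat.gcd.induction with
    | H0 y => simpa using fun _ h => h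
    | H1 x y hx ih =>
      intro hPx hPy
      rw [Nat.gcd_rec]
      have hda := Nat.div_add_mod y x
      have hmod : y % x = y - x * (y / x) := by omega
      have hle : x * (y / x) ≤ y := by omega
      have hsub := Psub y (x * (y / x)) hPy (Pmul' (y / x) x hPx) hle
      rw [← hmod] at hsub
      exact ih hsub hPx
  set g := Nat.gcd (2 * d) n with hg
  have Pg : P g := Pgcd _ _ P2d Pn
  have hg0 : 0 < g := Nat.gcd_pos_of_pos_right _ hn0
  have hgn : g ∣ n := Nat.gcd_dvd_right _ _
  have hgd : g ∣ 2 * d := Nat.gcd_dvd_left _ _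
  set r := d % g with hr
  have hrg : r < g := Nat.mod_lt _ hg0
  -- shifting by r negates
  have fr : ∀ i, f (i + r) = ! f i := by
    intro i
    have h1 := Pmul (d / g) g Pg (i + r)
    have h2 : i + r + d / g * g = i + d := by
      have h3 := Nat.mod_add_div' d g
      omega
    rw [h2] at h1
    rw [← h1, fd]
  have hr0 : r ≠ 0 := by
    intro h0
    have h1 := fr 0
    rw [h0] at h1
    simp at h1
  -- g = 2 * r
  have hg2r : g = 2 * r := by
    have hdvd : g ∣ 2 * r := by
      have h1 : g ∣ 2 * (g * (d / g)) := ⟨2 * (d / g), by ring⟩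
      have h2 : 2 * d = 2 * (g * (d / g)) + 2 * r := by
        have h3 := Nat.div_add_mod d g
        omega
      have h4 := Nat.dvd_sub hgd h1
      rwa [h2, Nat.add_sub_cancel_left] at h4
    obtain ⟨c, hc⟩ := hdvd
    have hc2 : c < 2 := by
      by_contra hge
      push_neg at hge
      have h2 := Nat.mul_le_mul_left g hge
      omega
    interval_cases c
    · simp at hc; omega
    · simp at hc; omega
  have hgn' : 2 * r ∣ n := hg2r ▸ hgn
  have P2r : P (2 * r) := hg2r ▸ Pg
  set k := n / (2 * r) with hk
  have hnk : n = k * (2 * r) := (Nat.div_mul_cancel hgn').symm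
  have hk1 : 1 ≤ k := Nat.div_pos (Nat.le_of_dvd hn0 hgn') (by omega)
  have hrn : r < n := lt_of_lt_of_le hrg (Nat.le_of_dvd hn0 hgn)
  set u := w.take r with hu
  have hulen : u.length = r := by
    simp only [hu, List.length_take]
    omega
  have hune : u ≠ [] := by
    intro hnil
    apply hr0
    rw [← hulen, hnil, List.length_nil]
  apply hpow u k hune hk1
  have hblen : (u ++ u.map fun x => !x).length = 2 * r := by
    simp [hulen]; omega
  have hb0 : 0 < (u ++ u.map fun x => !x).length := by omega
  apply List.ext_getElem
  · rw [flatten_replicate_length, hblen]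
    exact hnk
  · intro i hi1 hi2
    have hin : i < n := hi1
    rw [flatten_replicate_getElem _ hb0 k i hi2]
    have hj : i % (u ++ u.map fun x => !x).length = i % (2 * r) := by rw [hblen]
    have hjlt : i % (2 * r) < 2 * r := Nat.mod_lt _ (by omega)
    -- w[i] = f (i % (2r)) since 2r is a period
    have hfi : f i = f (i % (2 * r)) := by
      have h1 := Pmul (i / (2 * r)) (2 * r) P2r (i % (2 * r))
      rw [Nat.mod_add_div' i (2 * r)] at h1
      exact h1
    have hwi : w[i]'hi1 = f (i % (2 * r)) := by rw [← fI i hin, hfi]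
    by_cases hcase : i % (2 * r) < r
    · have hgl : i % (u ++ u.map fun x => !x).length < u.length := by
        rw [hj, hulen]; exact hcase
      rw [List.getElem_append_left hgl]
      have e4 : u[i % (u ++ u.map fun x => !x).length]'hgl =
          w[i % (2 * r)]'(by omega) := by
        simp only [hj]
        exact List.getElem_take
      rw [e4, hwi, fI _ (by omega : i % (2 * r) < n)]
    · push_neg at hcase
      have hge : u.length ≤ i % (u ++ u.map fun x => !x).length := by
        rw [hj, hulen]; exact hcase
      rw [List.getElem_append_right hge]
      rw [List.getElem_map]
      have e3 : i % (u ++ u.map fun x => !x).length - u.length = i % (2 * r) - r := by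
        rw [hj, hulen]
      have hlt2 : i % (2 * r) - r < u.length := by omega
      have e4 : u[i % (u ++ u.map fun x => !x).length - u.length]'(by
          rw [e3]; exact hlt2) = w[i % (2 * r) - r]'(by omega) := by
        simp only [e3]
        exact List.getElem_take
      rw [e4]
      have hfj : f (i % (2 * r)) = ! f (i % (2 * r) - r) := by
        have h1 := fr (i % (2 * r) - r)
        have e : i % (2 * r) - r + r = i % (2 * r) := by omega
        rw [e] at h1
        exact h1
      rw [hwi, hfj, fI _ (by omega : i % (2 * r) - r < n)]
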